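/- Let ι be a finite nonempty index type, let ψ₀ and ψ⋆ be unit vectors in EuclideanSpace ℂ ι, let U be a unitary operator on EuclideanSpace ℂ ι, let γ : ℝ and s : ι → ℝ, and let Sψ₀ be the vector with components (Sψ₀) w = exp(-I·γ·s w) · (ψ₀ w). Set p = ‖⟪ψ⋆, U ψ₀⟫‖², p⋆ = ‖⟪ψ⋆, U (Sψ₀)⟫‖², and q = ∑ w, 4 · ‖ψ₀ w‖² · (Real.sin (γ · s w / 2))². If q ≤ p, then p⋆ ≥ (Real.sqrt p - Real.sqrt q)². -/

import Mathlib

open scoped InnerProductSpace BigOperators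

lemma phase_coord_norm_aux (θ : ℝ) : ‖(1 - Complex.exp (-Complex.I * θ))‖ ^ 2 = 4 * Real.sin (θ/2) ^ 2 := by
  have h : -Complex.I * (θ : ℂ) = ((-θ : ℝ) : ℂ) * Complex.I := by push_cast; ring
  have hcos : Real.cos θ = 1 - 2 * Real.sin (θ/2) ^ 2 := by
    have h1 : Real.cos (2 * (θ/2)) = 2 * Real.cos (θ/2) ^ 2 - 1 := Real.cos_two_mul _
    have h2 := Real.sin_sq_add_cos_sq (θ/2)
    rw [show 2 * (θ/2) = θ by ring] at h1
    nlinarith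
  rw [h, Complex.sq_norm, Complex.normSq_apply]
  simp only [Complex.sub_re, Complex.one_re, Complex.sub_im, Complex.one_im,
    Complex.exp_ofReal_mul_I_re, Complex.exp_ofReal_mul_I_im, Real.cos_neg, Real.sin_neg]
  nlinarith [Real.sin_sq_add_cos_sq θ]

/-- Quantitative form of Lemma 1: if the unperturbed protocol succeeds with
probability `p` and the phase perturbation has weak overlap `q ≤ p`, then the
perturbed protocol succeeds with probability at least `(√p − √q)²`. -/
theorem phase_perturbation_success_bound
    {ι : Type*} [Fintype ι] [Nonempty ι]
    (ψ₀ ψstar : EuclideanSpace ℂ ι)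
    (hψ₀ : ‖ψ₀‖ = 1) (hψstar : ‖ψstar‖ = 1)
    (U : EuclideanSpace ℂ ι ≃ₗᵢ[ℂ] EuclideanSpace ℂ ι)
    (γ : ℝ) (s : ι → ℝ)
    (Sψ₀ : EuclideanSpace ℂ ι)
    (hS : ∀ w, Sψ₀ w = Complex.exp (-Complex.I * γ * s w) * ψ₀ w)
    (p pstar q : ℝ)
    (hp : p = ‖⟪ψstar, U ψ₀⟫_ℂ‖ ^ 2)
    (hpstar : pstar = ‖⟪ψstar, U Sψ₀⟫_ℂ‖ ^ 2)
    (hq : q = ∑ w, 4 * ‖ψ₀ w‖ ^ 2 * Real.sin (γ * s w / 2) ^ 2)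
    (hqp : q ≤ p) :
    pstar ≥ (Real.sqrt p - Real.sqrt q) ^ 2 := by
  set a := ⟪ψstar, U ψ₀⟫_ℂ with ha
  set b := ⟪ψstar, U Sψ₀⟫_ℂ with hb
  -- ‖ψ₀ - Sψ₀‖² = q
  have hdnorm : ‖ψ₀ - Sψ₀‖ ^ 2 = q := by
    have hcoord : ∀ w, ‖(ψ₀ - Sψ₀) w‖ ^ 2 = 4 * ‖ψ₀ w‖ ^ 2 * Real.sin (γ * s w / 2) ^ 2 := by
      intro w
      have harg : -Complex.I * (γ : ℂ) * (s w : ℂ) = -Complex.I * ((γ * s w : ℝ) : ℂ) := by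
        push_cast; ring
      have : (ψ₀ - Sψ₀) w = (1 - Complex.exp (-Complex.I * ((γ * s w : ℝ) : ℂ))) * ψ₀ w := by
        rw [PiLp.sub_apply, hS w, harg]; ring
      rw [this, norm_mul, mul_pow, phase_coord_norm_aux (γ * s w)]
      ring
    rw [hq, EuclideanSpace.norm_eq, Real.sq_sqrt (Finset.sum_nonneg fun w _ => by positivity)]
    exact Finset.sum_congr rfl fun w _ => hcoord w
  have hdiff : ‖a - b‖ ≤ Real.sqrt q := by
    have h1 : a - b = ⟪ψstar, U (ψ₀ - Sψ₀)⟫_ℂ := by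
      rw [ha, hb, map_sub, inner_sub_right]
    rw [h1]
    calc ‖⟪ψstar, U (ψ₀ - Sψ₀)⟫_ℂ‖ ≤ ‖ψstar‖ * ‖U (ψ₀ - Sψ₀)‖ := norm_inner_le_norm _ _
      _ = ‖ψ₀ - Sψ₀‖ := by rw [hψstar, one_mul, U.norm_map]
      _ = Real.sqrt q := by rw [← hdnorm, Real.sqrt_sq (norm_nonneg _)]
  have hpa : Real.sqrt p = ‖a‖ := by rw [hp, Real.sqrt_sq (norm_nonneg _)]
  have hba : Real.sqrt p - Real.sqrt q ≤ ‖b‖ := by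
    have := norm_sub_norm_le a b
    linarith [hpa ▸ this]
  have hnn : 0 ≤ Real.sqrt p - Real.sqrt q :=
    sub_nonneg.mpr (Real.sqrt_le_sqrt hqp)
  rw [hpstar]
  exact pow_le_pow_left₀ hnn hba 2
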